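/- Let N be a nonempty finite set and let f : 2^N → ℝ ∪ {-∞} be a set function whose effective domain dom f is nonempty and consists of equi-cardinal sets (|X| = |Y| for all X, Y ∈ dom f). If the conjugate function g(p) = max{ f(X) − p(X) : X ⊆ N } is submodular on ℝ^N, then f has the local exchange property: for any X, Y ∈ dom f with |X \ Y| = 2, there exist i ∈ X \ Y and j ∈ Y \ X such that f(X) + f(Y) ≤ f(X − i + j) + f(Y + i − j). -/

import Mathlib

open Finset

set_option maxHeartbeats 2000000 in
/-- If `dom f` is a nonempty family of equi-cardinal sets and the conjugate
`g(p) = max { f(X) - p(X) : X ⊆ N }` is submodular, then `f` has the local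
exchange property: for `X, Y ∈ dom f` with `|X \ Y| = 2` there are
`i ∈ X \ Y` and `j ∈ Y \ X` with `f(X) + f(Y) ≤ f(X - i + j) + f(Y + i - j)`. -/
theorem local_exchange_of_conjugate_submodular
    {N : Type*} [Fintype N] [DecidableEq N] [Nonempty N]
    (f : Finset N → WithBot ℝ) (hdom : ∃ X : Finset N, f X ≠ ⊥)
    (hequi : ∀ X Y : Finset N, f X ≠ ⊥ → f Y ≠ ⊥ → X.card = Y.card)
    (g : (N → ℝ) → ℝ)
    (hg : ∀ p : N → ℝ,
      (g p : WithBot ℝ) =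
        (Finset.univ : Finset (Finset N)).sup
          (fun X => f X + ((-(∑ i ∈ X, p i) : ℝ) : WithBot ℝ)))
    (hsub : ∀ p q : N → ℝ, g (p ⊔ q) + g (p ⊓ q) ≤ g p + g q) :
    ∀ X Y : Finset N, f X ≠ ⊥ → f Y ≠ ⊥ → (X \ Y).card = 2 →
      ∃ i ∈ X \ Y, ∃ j ∈ Y \ X,
        f X + f Y ≤ f (insert j (X.erase i)) + f ((insert i Y).erase j) := by
  classical
  intro X Y hX hY hcard2
  obtain ⟨i1, i2, hi12, hXY⟩ := Finset.card_eq_two.mp hcard2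
  have hYXcard : (Y \ X).card = 2 := by
    rw [Finset.card_sdiff_comm (hequi X Y hX hY)] at hcard2; exact hcard2
  obtain ⟨j1, j2, hj12, hYX⟩ := Finset.card_eq_two.mp hYXcard
  have hi1m : i1 ∈ X \ Y := by rw [hXY]; simp
  have hi2m : i2 ∈ X \ Y := by rw [hXY]; simp
  have hj1m : j1 ∈ Y \ X := by rw [hYX]; simp
  have hj2m : j2 ∈ Y \ X := by rw [hYX]; simp
  obtain ⟨hi1X, hi1Y⟩ := Finset.mem_sdiff.mp hi1m
  obtain ⟨hi2X, hi2Y⟩ := Finset.mem_sdiff.mp hi2m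
  obtain ⟨hj1Y, hj1X⟩ := Finset.mem_sdiff.mp hj1m
  obtain ⟨hj2Y, hj2X⟩ := Finset.mem_sdiff.mp hj2m
  have hi1j1 : i1 ≠ j1 := fun h => hj1X (h ▸ hi1X)
  have hi1j2 : i1 ≠ j2 := fun h => hj2X (h ▸ hi1X)
  have hi2j1 : i2 ≠ j1 := fun h => hj1X (h ▸ hi2X)
  have hi2j2 : i2 ≠ j2 := fun h => hj2X (h ▸ hi2X)
  have hmX : ∀ v, v ∈ X ∧ v ∉ Y ↔ (v = i1 ∨ v = i2) := by
    intro v; rw [← Finset.mem_sdiff, hXY]; simp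
  have hmY : ∀ v, v ∈ Y ∧ v ∉ X ↔ (v = j1 ∨ v = j2) := by
    intro v; rw [← Finset.mem_sdiff, hYX]; simp
  set I := X ∩ Y with hIdef
  have hi1I : i1 ∉ I := fun h => hi1Y (Finset.mem_inter.mp h).2
  have hi2I : i2 ∉ I := fun h => hi2Y (Finset.mem_inter.mp h).2
  have hj1I : j1 ∉ I := fun h => hj1X (Finset.mem_inter.mp h).1
  have hj2I : j2 ∉ I := fun h => hj2X (Finset.mem_inter.mp h).1
  -- decompositions
  have hXd : X = I ∪ {i1, i2} := by
    ext v
    simp only [hIdef, Finset.mem_union, Finset.mem_inter, Finset.mem_insert, Finset.mem_singleton]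
    constructor
    · intro hvX
      by_cases hvY : v ∈ Y
      · exact Or.inl ⟨hvX, hvY⟩
      · exact Or.inr ((hmX v).mp ⟨hvX, hvY⟩)
    · rintro (⟨h, _⟩ | rfl | rfl)
      · exact h
      · exact hi1X
      · exact hi2X
  have hYd : Y = I ∪ {j1, j2} := by
    ext v
    simp only [hIdef, Finset.mem_union, Finset.mem_inter, Finset.mem_insert, Finset.mem_singleton]
    constructor
    · intro hvY
      by_cases hvX : v ∈ X
      · exact Or.inl ⟨hvX, hvY⟩
      · exact Or.inr ((hmY v).mp ⟨hvY, hvX⟩)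
    · rintro (⟨_, h⟩ | rfl | rfl)
      · exact h
      · exact hj1Y
      · exact hj2Y
  set SA := I ∪ {i1, j1} with hSAdef
  set SB := I ∪ {i1, j2} with hSBdef
  set SC := I ∪ {i2, j1} with hSCdef
  set SD := I ∪ {i2, j2} with hSDdef
  have hSAeq : insert j1 (X.erase i2) = SA := by
    ext v
    simp only [hSAdef, hIdef, Finset.mem_insert, Finset.mem_erase, Finset.mem_union,
      Finset.mem_inter, Finset.mem_singleton]
    constructor
    · rintro (rfl | ⟨hvi2, hvX⟩)
      · exact Or.inr (Or.inr rfl)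
      · by_cases hvY : v ∈ Y
        · exact Or.inl ⟨hvX, hvY⟩
        · rcases (hmX v).mp ⟨hvX, hvY⟩ with rfl | rfl
          · exact Or.inr (Or.inl rfl)
          · exact absurd rfl hvi2
    · rintro (⟨hvX, hvY⟩ | rfl | rfl)
      · exact Or.inr ⟨fun h => hi2Y (h ▸ hvY), hvX⟩
      · exact Or.inr ⟨hi12, hi1X⟩
      · exact Or.inl rfl
  have hSBeq : insert j2 (X.erase i2) = SB := by
    ext v
    simp only [hSBdef, hIdef, Finset.mem_insert, Finset.mem_erase, Finset.mem_union,
      Finset.mem_inter, Finset.mem_singleton]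
    constructor
    · rintro (rfl | ⟨hvi2, hvX⟩)
      · exact Or.inr (Or.inr rfl)
      · by_cases hvY : v ∈ Y
        · exact Or.inl ⟨hvX, hvY⟩
        · rcases (hmX v).mp ⟨hvX, hvY⟩ with rfl | rfl
          · exact Or.inr (Or.inl rfl)
          · exact absurd rfl hvi2
    · rintro (⟨hvX, hvY⟩ | rfl | rfl)
      · exact Or.inr ⟨fun h => hi2Y (h ▸ hvY), hvX⟩
      · exact Or.inr ⟨hi12, hi1X⟩
      · exact Or.inl rfl
  have hSCeq : (insert i2 Y).erase j2 = SC := by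
    ext v
    simp only [hSCdef, hIdef, Finset.mem_erase, Finset.mem_insert, Finset.mem_union,
      Finset.mem_inter, Finset.mem_singleton]
    constructor
    · rintro ⟨hvj2, (rfl | hvY)⟩
      · exact Or.inr (Or.inl rfl)
      · by_cases hvX : v ∈ X
        · exact Or.inl ⟨hvX, hvY⟩
        · rcases (hmY v).mp ⟨hvY, hvX⟩ with rfl | rfl
          · exact Or.inr (Or.inr rfl)
          · exact absurd rfl hvj2
    · rintro (⟨hvX, hvY⟩ | rfl | rfl)
      · exact ⟨fun h => hj2X (h ▸ hvX), Or.inr hvY⟩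
      · exact ⟨hi2j2, Or.inl rfl⟩
      · exact ⟨hj12, Or.inr hj1Y⟩
  have hSDeq : (insert i2 Y).erase j1 = SD := by
    ext v
    simp only [hSDdef, hIdef, Finset.mem_erase, Finset.mem_insert, Finset.mem_union,
      Finset.mem_inter, Finset.mem_singleton]
    constructor
    · rintro ⟨hvj1, (rfl | hvY)⟩
      · exact Or.inr (Or.inl rfl)
      · by_cases hvX : v ∈ X
        · exact Or.inl ⟨hvX, hvY⟩
        · rcases (hmY v).mp ⟨hvY, hvX⟩ with rfl | rfl
          · exact absurd rfl hvj1
          · exact Or.inr (Or.inr rfl)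
    · rintro (⟨hvX, hvY⟩ | rfl | rfl)
      · exact ⟨fun h => hj1X (h ▸ hvX), Or.inr hvY⟩
      · exact ⟨hi2j1, Or.inl rfl⟩
      · exact ⟨fun h => hj12 h.symm, Or.inr hj2Y⟩
  
  -- real values
  obtain ⟨x, hx⟩ := WithBot.ne_bot_iff_exists.mp hX
  obtain ⟨y, hy⟩ := WithBot.ne_bot_iff_exists.mp hY
  set F := ((Finset.univ : Finset (Finset N)).sup f).unbotD 0 with hFdef
  have hF : ∀ Z, f Z ≤ (F : WithBot ℝ) :=
    fun Z => le_trans (Finset.le_sup (Finset.mem_univ Z)) (WithBot.le_coe_unbotD _ 0)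
  have hxF : x ≤ F := by
    have := hF X; rw [← hx] at this; exact_mod_cast this
  have hyF : y ≤ F := by
    have := hF Y; rw [← hy] at this; exact_mod_cast this
  set K := |F| + |x| + |y| + 1 with hKdef
  set rA := (f SA).unbotD (-K) with hrAdef
  set rB := (f SB).unbotD (-K) with hrBdef
  set rC := (f SC).unbotD (-K) with hrCdef
  set rD := (f SD).unbotD (-K) with hrDdef
  have hrAle : f SA ≤ (rA : WithBot ℝ) := WithBot.le_coe_unbotD _ _
  have hrBle : f SB ≤ (rB : WithBot ℝ) := WithBot.le_coe_unbotD _ _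
  have hrCle : f SC ≤ (rC : WithBot ℝ) := WithBot.le_coe_unbotD _ _
  have hrDle : f SD ≤ (rD : WithBot ℝ) := WithBot.le_coe_unbotD _ _
  have hKF : -K ≤ F := by
    have h1 := le_abs_self F
    have h2 := neg_abs_le F
    have h3 := abs_nonneg x
    have h4 := abs_nonneg y
    rw [hKdef]; linarith
  have hrF : ∀ (S : Finset N) (r : ℝ), r = (f S).unbotD (-K) → r ≤ F := by
    intro S r hr
    by_cases hS : f S = ⊥
    · rw [hr, hS]; exact hKF
    · obtain ⟨u, hu⟩ := WithBot.ne_bot_iff_exists.mp hS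
      have h5 := hF S
      rw [← hu] at h5
      rw [hr, ← hu]
      simpa using h5
  have hrAF : rA ≤ F := hrF SA rA hrAdef
  have hrBF : rB ≤ F := hrF SB rB hrBdef
  have hrCF : rC ≤ F := hrF SC rC hrCdef
  have hrDF : rD ≤ F := hrF SD rD hrDdef
  set μ := max (rB - rD) (rA - rC) with hμdef
  set t' := rD + μ - x with ht'def
  set s' := rC + μ - x with hs'def
  set L := |y| + |x| + |rA| + |rB| + |rC| + |rD| + |μ| + 1 with hLdef
  set s := max s' L with hsdef
  set t := max t' L with htdef
  set M := |F| + 2 * |μ| + |s| + |t| + |s'| + |t'| + |x| + 1 with hMdef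
  have hM0 : 0 ≤ M := by
    have h1 := abs_nonneg F; have h2 := abs_nonneg μ; have h3 := abs_nonneg s
    have h4 := abs_nonneg t; have h5 := abs_nonneg s'; have h6 := abs_nonneg t'
    have h7 := abs_nonneg x
    rw [hMdef]; linarith
  set m := (I.card : ℝ) with hmdef
  set V : ℝ → ℝ → N → ℝ := fun σ τ v =>
    if v = i1 then μ else if v = i2 then 0 else if v = j1 then σ else if v = j2 then τ
    else if v ∈ X then -M else M with hVdef
  have hVi1 : ∀ σ τ, V σ τ i1 = μ := by intro σ τ; simp [hVdef]
  have hVi2 : ∀ σ τ, V σ τ i2 = 0 := by intro σ τ; simp [hVdef, Ne.symm hi12]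
  have hVj1 : ∀ σ τ, V σ τ j1 = σ := by
    intro σ τ; simp [hVdef, Ne.symm hi1j1, Ne.symm hi2j1]
  have hVj2 : ∀ σ τ, V σ τ j2 = τ := by
    intro σ τ; simp [hVdef, Ne.symm hi1j2, Ne.symm hi2j2, Ne.symm hj12]
  have hVI : ∀ σ τ, ∀ v ∈ I, V σ τ v = -M := by
    intro σ τ v hv
    obtain ⟨hvX, hvY⟩ := Finset.mem_inter.mp (hIdef ▸ hv)
    have h1 : v ≠ i1 := fun h => hi1Y (h ▸ hvY)
    have h2 : v ≠ i2 := fun h => hi2Y (h ▸ hvY)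
    have h3 : v ≠ j1 := fun h => hj1X (h ▸ hvX)
    have h4 : v ≠ j2 := fun h => hj2X (h ▸ hvX)
    simp [hVdef, h1, h2, h3, h4, hvX]
  have hVout : ∀ σ τ, ∀ v, v ∉ X → v ∉ Y → V σ τ v = M := by
    intro σ τ v hvX hvY
    have h1 : v ≠ i1 := fun h => hvX (h ▸ hi1X)
    have h2 : v ≠ i2 := fun h => hvX (h ▸ hi2X)
    have h3 : v ≠ j1 := fun h => hvY (h ▸ hj1Y)
    have h4 : v ≠ j2 := fun h => hvY (h ▸ hj2Y)
    simp [hVdef, h1, h2, h3, h4, hvX]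
  have hsumI : ∀ σ τ, ∑ v ∈ I, V σ τ v = -M * m := by
    intro σ τ
    rw [Finset.sum_congr rfl (hVI σ τ), Finset.sum_const, hmdef]
    simp [nsmul_eq_mul]; ring
  have hsumU : ∀ (σ τ : ℝ) (a b : N), a ≠ b → a ∉ I → b ∉ I →
      ∑ v ∈ I ∪ {a, b}, V σ τ v = -M * m + V σ τ a + V σ τ b := by
    intro σ τ a b hab haI hbI
    have hdisj : Disjoint I ({a, b} : Finset N) := by
      rw [Finset.disjoint_right]
      intro v hv
      rcases Finset.mem_insert.mp hv with rfl | hv2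
      · exact haI
      · rw [Finset.mem_singleton.mp hv2]; exact hbI
    rw [Finset.sum_union hdisj, Finset.sum_pair hab, hsumI]
    ring
  -- conjugate bounds
  have glb : ∀ (p : N → ℝ) (Z : Finset N) (z : ℝ), f Z = (z : WithBot ℝ) →
      z - ∑ v ∈ Z, p v ≤ g p := by
    intro p Z z hz
    have h1 : f Z + ((-(∑ i ∈ Z, p i) : ℝ) : WithBot ℝ) ≤ (g p : WithBot ℝ) := by
      rw [hg p]
      exact Finset.le_sup (f := fun W => f W + ((-(∑ i ∈ W, p i) : ℝ) : WithBot ℝ))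
        (Finset.mem_univ Z)
    rw [hz] at h1
    have h2 : ((z - ∑ v ∈ Z, p v : ℝ) : WithBot ℝ) ≤ (g p : WithBot ℝ) := by
      refine le_trans (le_of_eq ?_) h1
      rw [show z - ∑ v ∈ Z, p v = z + -∑ v ∈ Z, p v from by ring, WithBot.coe_add]
    exact_mod_cast h2
  have gub : ∀ (p : N → ℝ) (c : ℝ),
      (∀ Z : Finset N, f Z + ((-(∑ i ∈ Z, p i) : ℝ) : WithBot ℝ) ≤ (c : WithBot ℝ)) →
      g p ≤ c := by
    intro p c h
    have h2 : (g p : WithBot ℝ) ≤ (c : WithBot ℝ) := by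
      rw [hg p]; exact Finset.sup_le (fun Z _ => h Z)
    exact_mod_cast h2
  -- junk lower bound for weights
  have hjunk : ∀ (σ τ : ℝ) (Z : Finset N), ¬(I ⊆ Z ∧ Z ⊆ X ∪ Y) →
      -(M * m) + M - (|μ| + |σ| + |τ|) ≤ ∑ v ∈ Z, V σ τ v := by
    intro σ τ Z hZ
    set Z1 := Z ∩ I with hZ1def
    set Z2 := Z ∩ ({i1, i2, j1, j2} : Finset N) with hZ2def
    set Z3 := Z \ (X ∪ Y) with hZ3def
    have hsplit : Z = (Z1 ∪ Z2) ∪ Z3 := by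
      ext v
      simp only [hZ1def, hZ2def, hZ3def, hIdef, Finset.mem_union, Finset.mem_inter,
        Finset.mem_sdiff, Finset.mem_insert, Finset.mem_singleton]
      constructor
      · intro hv
        by_cases hvX : v ∈ X
        · by_cases hvY : v ∈ Y
          · exact Or.inl (Or.inl ⟨hv, hvX, hvY⟩)
          · rcases (hmX v).mp ⟨hvX, hvY⟩ with rfl | rfl
            · exact Or.inl (Or.inr ⟨hv, Or.inl rfl⟩)
            · exact Or.inl (Or.inr ⟨hv, Or.inr (Or.inl rfl)⟩)
        · by_cases hvY : v ∈ Y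
          · rcases (hmY v).mp ⟨hvY, hvX⟩ with rfl | rfl
            · exact Or.inl (Or.inr ⟨hv, Or.inr (Or.inr (Or.inl rfl))⟩)
            · exact Or.inl (Or.inr ⟨hv, Or.inr (Or.inr (Or.inr rfl))⟩)
          · exact Or.inr ⟨hv, fun h => h.elim hvX hvY⟩
      · rintro ((⟨hv, _⟩ | ⟨hv, _⟩) | ⟨hv, _⟩) <;> exact hv
    have hd12 : Disjoint Z1 Z2 := by
      rw [Finset.disjoint_left]
      intro v hv1 hv2
      obtain ⟨_, hvI⟩ := Finset.mem_inter.mp hv1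
      obtain ⟨_, hv4⟩ := Finset.mem_inter.mp hv2
      rcases Finset.mem_insert.mp hv4 with rfl | hv4b
      · exact hi1I hvI
      rcases Finset.mem_insert.mp hv4b with rfl | hv4c
      · exact hi2I hvI
      rcases Finset.mem_insert.mp hv4c with rfl | hv4d
      · exact hj1I hvI
      · rw [Finset.mem_singleton.mp hv4d] at hvI; exact hj2I hvI
    have hd3 : Disjoint (Z1 ∪ Z2) Z3 := by
      rw [Finset.disjoint_right]
      intro v hv3
      obtain ⟨_, hvout⟩ := Finset.mem_sdiff.mp hv3
      intro hv12
      rcases Finset.mem_union.mp hv12 with hv1 | hv2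
      · obtain ⟨_, hvI⟩ := Finset.mem_inter.mp hv1
        exact hvout (Finset.mem_union_left _ (Finset.mem_of_mem_inter_left (hIdef ▸ hvI)))
      · obtain ⟨_, hv4⟩ := Finset.mem_inter.mp hv2
        rcases Finset.mem_insert.mp hv4 with rfl | hv4b
        · exact hvout (Finset.mem_union_left _ hi1X)
        rcases Finset.mem_insert.mp hv4b with rfl | hv4c
        · exact hvout (Finset.mem_union_left _ hi2X)
        rcases Finset.mem_insert.mp hv4c with rfl | hv4d
        · exact hvout (Finset.mem_union_right _ hj1Y)
        · have hvj2 : v = j2 := Finset.mem_singleton.mp hv4d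
          subst hvj2
          exact hvout (Finset.mem_union_right _ hj2Y)
    have hsum1 : ∑ v ∈ Z1, V σ τ v = -M * (Z1.card : ℝ) := by
      rw [Finset.sum_congr rfl (fun v hv => hVI σ τ v (Finset.mem_inter.mp hv).2),
        Finset.sum_const]
      simp [nsmul_eq_mul]; ring
    have hsum2 : -(|μ| + |σ| + |τ|) ≤ ∑ v ∈ Z2, V σ τ v := by
      have h1 : ∑ v ∈ Z2, -|V σ τ v| ≤ ∑ v ∈ Z2, V σ τ v :=
        Finset.sum_le_sum (fun v _ => neg_abs_le _)
      have h2 : ∑ v ∈ Z2, |V σ τ v| ≤ ∑ v ∈ ({i1, i2, j1, j2} : Finset N), |V σ τ v| :=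
        Finset.sum_le_sum_of_subset_of_nonneg Finset.inter_subset_right
          (fun v _ _ => abs_nonneg _)
      have h3 : ∑ v ∈ ({i1, i2, j1, j2} : Finset N), |V σ τ v| = |μ| + |σ| + |τ| := by
        rw [show ({i1, i2, j1, j2} : Finset N) = insert i1 (insert i2 (insert j1 {j2})) from rfl]
        rw [Finset.sum_insert (by simp [hi12, hi1j1, hi1j2]),
          Finset.sum_insert (by simp [hi2j1, hi2j2]),
          Finset.sum_insert (by simp [hj12]), Finset.sum_singleton,
          hVi1, hVi2, hVj1, hVj2]
        simp; ring
      have h4 : ∑ v ∈ Z2, -|V σ τ v| = -∑ v ∈ Z2, |V σ τ v| := by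
        rw [Finset.sum_neg_distrib]
      linarith
    have hsum3 : ∑ v ∈ Z3, V σ τ v = M * (Z3.card : ℝ) := by
      rw [Finset.sum_congr rfl (fun v hv => by
        obtain ⟨_, hvout⟩ := Finset.mem_sdiff.mp hv
        exact hVout σ τ v (fun h => hvout (Finset.mem_union_left _ h))
          (fun h => hvout (Finset.mem_union_right _ h))), Finset.sum_const]
      simp [nsmul_eq_mul]; ring
    have hcase : (Z1.card : ℝ) ≤ m - 1 ∨ (1 : ℝ) ≤ (Z3.card : ℝ) := by
      rcases not_and_or.mp hZ with h | h
      · left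
        obtain ⟨v0, hv0I, hv0Z⟩ := Finset.not_subset.mp h
        have hsubE : Z1 ⊆ I.erase v0 := by
          intro v hv
          obtain ⟨hvZ, hvI⟩ := Finset.mem_inter.mp hv
          exact Finset.mem_erase.mpr ⟨fun hvv => hv0Z (hvv ▸ hvZ), hvI⟩
        have h1 : Z1.card ≤ I.card - 1 := by
          have h2 := Finset.card_le_card hsubE
          rw [Finset.card_erase_of_mem hv0I] at h2
          exact h2
        have h2 : 1 ≤ I.card := Finset.card_pos.mpr ⟨v0, hv0I⟩
        rw [hmdef]
        have h3 : (Z1.card : ℝ) ≤ (I.card : ℝ) - 1 := by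
          have h4 : Z1.card + 1 ≤ I.card := by omega
          have h5 : ((Z1.card + 1 : ℕ) : ℝ) ≤ ((I.card : ℕ) : ℝ) := Nat.cast_le.mpr h4
          push_cast at h5
          linarith
        exact h3
      · right
        obtain ⟨v0, hv0Z, hv0out⟩ := Finset.not_subset.mp h
        have hv03 : v0 ∈ Z3 := Finset.mem_sdiff.mpr ⟨hv0Z, hv0out⟩
        have h1 : 1 ≤ Z3.card := Finset.card_pos.mpr ⟨v0, hv03⟩
        exact_mod_cast h1
    have hZ1m : (Z1.card : ℝ) ≤ m := by
      rw [hmdef]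
      exact_mod_cast Finset.card_le_card Finset.inter_subset_right
    have htot : ∑ v ∈ Z, V σ τ v =
        -M * (Z1.card : ℝ) + ∑ v ∈ Z2, V σ τ v + M * (Z3.card : ℝ) := by
      rw [hsplit, Finset.sum_union hd3, Finset.sum_union hd12, hsum1, hsum3]
    have h3nn : (0 : ℝ) ≤ (Z3.card : ℝ) := Nat.cast_nonneg _
    rcases hcase with hc | hc
    · have p1 : M * (Z1.card : ℝ) ≤ M * (m - 1) := mul_le_mul_of_nonneg_left hc hM0
      have p2 : (0 : ℝ) ≤ M * (Z3.card : ℝ) := mul_nonneg hM0 h3nn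
      linarith [hsum2, htot]
    · have p1 : M * (Z1.card : ℝ) ≤ M * m := mul_le_mul_of_nonneg_left hZ1m hM0
      have p3 : M * 1 ≤ M * (Z3.card : ℝ) := mul_le_mul_of_nonneg_left hc hM0
      linarith [hsum2, htot]
  -- main upper bound for the conjugate at the pinned vectors
  have main_ub : ∀ σ τ : ℝ, |σ| ≤ |s| + |s'| → |τ| ≤ |t| + |t'| →
      y - σ - τ ≤ x - μ → rA - μ - σ ≤ x - μ → rB - μ - τ ≤ x - μ →
      rC - σ ≤ x - μ → rD - τ ≤ x - μ →
      g (V σ τ) ≤ M * m + (x - μ) := by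
    intro σ τ hσ hτ hb2 hb3 hb4 hb5 hb6
    apply gub
    intro Z
    have key : ∀ (a b : N) (r' : ℝ), a ≠ b → a ∉ I → b ∉ I →
        f (I ∪ {a, b}) ≤ (r' : WithBot ℝ) → r' - V σ τ a - V σ τ b ≤ x - μ →
        f (I ∪ {a, b}) + ((-(∑ v ∈ I ∪ {a, b}, V σ τ v) : ℝ) : WithBot ℝ) ≤
          ((M * m + (x - μ) : ℝ) : WithBot ℝ) := by
      intro a b r' h1 h2 h3 h4 h5
      calc f (I ∪ {a, b}) + ((-(∑ v ∈ I ∪ {a, b}, V σ τ v) : ℝ) : WithBot ℝ)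
          ≤ (r' : WithBot ℝ) + ((-(∑ v ∈ I ∪ {a, b}, V σ τ v) : ℝ) : WithBot ℝ) :=
            add_le_add_left h4 _
        _ = ((r' + -(∑ v ∈ I ∪ {a, b}, V σ τ v) : ℝ) : WithBot ℝ) := by
            rw [WithBot.coe_add]
        _ ≤ ((M * m + (x - μ) : ℝ) : WithBot ℝ) := by
            apply WithBot.coe_le_coe.mpr
            rw [hsumU σ τ a b h1 h2 h3]
            linarith
    by_cases hZb : f Z = ⊥
    · rw [hZb]
      simp
    · by_cases hZI : I ⊆ Z ∧ Z ⊆ X ∪ Y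
      · obtain ⟨hIZ, hZXY⟩ := hZI
        have hcardX : X.card = I.card + 2 := by
          have hq := Finset.card_sdiff_add_card_inter X Y
          rw [hXY] at hq
          have hpair : ({i1, i2} : Finset N).card = 2 := Finset.card_pair hi12
          rw [hpair] at hq
          rw [hIdef]
          omega
        have hcardZ : Z.card = I.card + 2 := by
          rw [hequi Z X hZb hX, hcardX]
        have hPcard : (Z \ I).card = 2 := by
          rw [Finset.card_sdiff_of_subset hIZ, hcardZ]
          omega
        have hPsub : ∀ v ∈ Z \ I, v = i1 ∨ v = i2 ∨ v = j1 ∨ v = j2 := by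
          intro v hv
          obtain ⟨hvZ, hvI⟩ := Finset.mem_sdiff.mp hv
          rcases Finset.mem_union.mp (hZXY hvZ) with h | h
          · by_cases hvY : v ∈ Y
            · exact absurd (hIdef ▸ Finset.mem_inter.mpr ⟨h, hvY⟩) hvI
            · rcases (hmX v).mp ⟨h, hvY⟩ with h' | h'
              · exact Or.inl h'
              · exact Or.inr (Or.inl h')
          · by_cases hvX : v ∈ X
            · exact absurd (hIdef ▸ Finset.mem_inter.mpr ⟨hvX, h⟩) hvI
            · rcases (hmY v).mp ⟨h, hvX⟩ with h' | h'
              · exact Or.inr (Or.inr (Or.inl h'))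
              · exact Or.inr (Or.inr (Or.inr h'))
        obtain ⟨a, b, hab, hPab⟩ := Finset.card_eq_two.mp hPcard
        have hZeq : Z = I ∪ {a, b} := by
          rw [← hPab]
          exact (Finset.union_sdiff_of_subset hIZ).symm
        have haP : a ∈ Z \ I := by rw [hPab]; simp
        have hbP : b ∈ Z \ I := by rw [hPab]; simp
        have ha4 := hPsub a haP
        have hb4 := hPsub b hbP
        have hxle : f X = (x : WithBot ℝ) := hx.symm
        have hyle : f Y = (y : WithBot ℝ) := hy.symm
        rcases ha4 with ha | ha | ha | ha <;> rcases hb4 with hb | hb | hb | hb <;>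
          rw [hZeq, ha, hb]
        · exact absurd (ha.trans hb.symm) hab
        · exact key i1 i2 x hi12 hi1I hi2I (by rw [← hXd, hxle]) (by
            rw [hVi1, hVi2]; linarith)
        · exact key i1 j1 rA hi1j1 hi1I hj1I (hSAdef ▸ hrAle) (by
            rw [hVi1, hVj1]; linarith)
        · exact key i1 j2 rB hi1j2 hi1I hj2I (hSBdef ▸ hrBle) (by
            rw [hVi1, hVj2]; linarith)
        · exact key i2 i1 x (Ne.symm hi12) hi2I hi1I (by rw [Finset.pair_comm, ← hXd, hxle]) (by
            rw [hVi1, hVi2]; linarith)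
        · exact absurd (ha.trans hb.symm) hab
        · exact key i2 j1 rC hi2j1 hi2I hj1I (hSCdef ▸ hrCle) (by
            rw [hVi2, hVj1]; linarith)
        · exact key i2 j2 rD hi2j2 hi2I hj2I (hSDdef ▸ hrDle) (by
            rw [hVi2, hVj2]; linarith)
        · exact key j1 i1 rA (Ne.symm hi1j1) hj1I hi1I
            (by rw [Finset.pair_comm]; exact hSAdef ▸ hrAle) (by
            rw [hVi1, hVj1]; linarith)
        · exact key j1 i2 rC (Ne.symm hi2j1) hj1I hi2I
            (by rw [Finset.pair_comm]; exact hSCdef ▸ hrCle) (by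
            rw [hVi2, hVj1]; linarith)
        · exact absurd (ha.trans hb.symm) hab
        · exact key j1 j2 y hj12 hj1I hj2I (by rw [← hYd, hyle]) (by
            rw [hVj1, hVj2]; linarith)
        · exact key j2 i1 rB (Ne.symm hi1j2) hj2I hi1I
            (by rw [Finset.pair_comm]; exact hSBdef ▸ hrBle) (by
            rw [hVi1, hVj2]; linarith)
        · exact key j2 i2 rD (Ne.symm hi2j2) hj2I hi2I
            (by rw [Finset.pair_comm]; exact hSDdef ▸ hrDle) (by
            rw [hVi2, hVj2]; linarith)
        · exact key j2 j1 y (Ne.symm hj12) hj2I hj1I (by rw [Finset.pair_comm, ← hYd, hyle]) (by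
            rw [hVj1, hVj2]; linarith)
        · exact absurd (ha.trans hb.symm) hab
      · -- junk case
        obtain ⟨z, hz⟩ := WithBot.ne_bot_iff_exists.mp hZb
        have hzF : z ≤ F := by
          have := hF Z; rw [← hz] at this; exact_mod_cast this
        have hsums := hjunk σ τ Z hZI
        have hMbig : F + (M * m - M + (|μ| + |σ| + |τ|)) ≤ M * m + (x - μ) := by
          have a1 := le_abs_self F
          have a2 := le_abs_self μ
          have a3 := neg_abs_le μ
          have a4 := le_abs_self x
          have a5 := neg_abs_le x
          rw [hMdef]
          have a6 : μ ≤ |μ| := le_abs_self μ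
          linarith [hσ, hτ, abs_nonneg s, abs_nonneg t, abs_nonneg s', abs_nonneg t']
        calc f Z + ((-(∑ v ∈ Z, V σ τ v) : ℝ) : WithBot ℝ)
            = ((z + -(∑ v ∈ Z, V σ τ v) : ℝ) : WithBot ℝ) := by rw [← hz, WithBot.coe_add]
          _ ≤ ((M * m + (x - μ) : ℝ) : WithBot ℝ) := by
              apply WithBot.coe_le_coe.mpr
              linarith
  -- lower bounds
  have hlowX : ∀ σ τ : ℝ, x + M * m - μ ≤ g (V σ τ) := by
    intro σ τ
    have h := glb (V σ τ) X x hx.symm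
    have hsx : ∑ v ∈ X, V σ τ v = -M * m + V σ τ i1 + V σ τ i2 := by
      rw [hXd]; exact hsumU σ τ i1 i2 hi12 hi1I hi2I
    rw [hsx, hVi1, hVi2] at h
    linarith
  have hlowY : ∀ σ τ : ℝ, y + M * m - σ - τ ≤ g (V σ τ) := by
    intro σ τ
    have h := glb (V σ τ) Y y hy.symm
    have hsy : ∑ v ∈ Y, V σ τ v = -M * m + V σ τ j1 + V σ τ j2 := by
      rw [hYd]; exact hsumU σ τ j1 j2 hj12 hj1I hj2I
    rw [hsy, hVj1, hVj2] at h
    linarith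
  -- lattice identities
  have hs's : s' ≤ s := le_max_left _ _
  have ht't : t' ≤ t := le_max_left _ _
  have hsup : V s t' ⊔ V s' t = V s t := by
    funext v
    show V s t' v ⊔ V s' t v = V s t v
    simp only [hVdef]
    split_ifs
    · exact max_self _
    · exact max_self _
    · exact sup_eq_left.mpr hs's
    · exact sup_eq_right.mpr ht't
    · exact max_self _
    · exact max_self _
  have hinf : V s t' ⊓ V s' t = V s' t' := by
    funext v
    show V s t' v ⊓ V s' t v = V s' t' v
    simp only [hVdef]
    split_ifs
    · exact min_self _
    · exact min_self _
    · exact inf_eq_right.mpr hs's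
    · exact inf_eq_left.mpr ht't
    · exact min_self _
    · exact min_self _
  -- abs facts
  have habsy := le_abs_self y
  have habsy' := neg_abs_le y
  have habsx := le_abs_self x
  have habsx' := neg_abs_le x
  have habsA := le_abs_self rA
  have habsA' := neg_abs_le rA
  have habsB := le_abs_self rB
  have habsB' := neg_abs_le rB
  have habsC := le_abs_self rC
  have habsC' := neg_abs_le rC
  have habsD := le_abs_self rD
  have habsD' := neg_abs_le rD
  have habsμ := le_abs_self μ
  have habsμ' := neg_abs_le μ
  have hLs : L ≤ s := le_max_right _ _
  have hLt : L ≤ t := le_max_right _ _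
  have hμB : rB - rD ≤ μ := le_max_left _ _
  have hμA : rA - rC ≤ μ := le_max_right _ _
  -- the two upper bounds
  have hub1 : g (V s t') ≤ M * m + (x - μ) := by
    apply main_ub s t'
    · have := le_abs_self s; have := abs_nonneg s'
      calc |s| ≤ |s| + 0 := by linarith
        _ ≤ |s| + |s'| := by linarith [abs_nonneg s']
    · linarith [abs_nonneg t, le_refl |t'|]
    · -- y - s - t' ≤ x - μ  ⟸  s ≥ y - rD  (since t' = rD + μ - x)
      rw [ht'def] at *
      have h1 : y - rD ≤ L := by rw [hLdef]; linarith
      linarith [hLs]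
    · -- rA - μ - s ≤ x - μ ⟸ s ≥ rA - x
      have h1 : rA - x ≤ L := by rw [hLdef]; linarith
      linarith [hLs]
    · -- rB - μ - t' ≤ x - μ ⟸ rB - rD ≤ μ
      rw [ht'def]
      linarith
    · -- rC - s ≤ x - μ ⟸ s ≥ rC - x + μ
      have h1 : rC - x + μ ≤ L := by rw [hLdef]; linarith
      linarith [hLs]
    · -- rD - t' = x - μ
      rw [ht'def]
      linarith
  have hub2 : g (V s' t) ≤ M * m + (x - μ) := by
    apply main_ub s' t
    · linarith [abs_nonneg s, le_refl |s'|]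
    · have := le_abs_self t
      calc |t| ≤ |t| + 0 := by linarith
        _ ≤ |t| + |t'| := by linarith [abs_nonneg t']
    · -- y - s' - t ≤ x - μ ⟸ t ≥ y - rC (since s' = rC + μ - x)
      rw [hs'def]
      have h1 : y - rC ≤ L := by rw [hLdef]; linarith
      linarith [hLt]
    · -- rA - μ - s' ≤ x - μ ⟸ rA - rC ≤ μ
      rw [hs'def]
      linarith
    · -- rB - μ - t ≤ x - μ ⟸ t ≥ rB - x
      have h1 : rB - x ≤ L := by rw [hLdef]; linarith
      linarith [hLt]
    · -- rC - s' = x - μ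
      rw [hs'def]
      linarith
    · -- rD - t ≤ x - μ ⟸ t ≥ rD - x + μ
      have h1 : rD - x + μ ≤ L := by rw [hLdef]; linarith
      linarith [hLt]
  -- the submodularity chain
  have hchain := hsub (V s t') (V s' t)
  rw [hsup, hinf] at hchain
  have hlow1 := hlowX s t
  have hlow2 := hlowY s' t'
  have hfin : x + y ≤ rC + rD + μ := by
    have h1 : (x + M * m - μ) + (y + M * m - s' - t') ≤
        (M * m + (x - μ)) + (M * m + (x - μ)) := by
      linarith [hub1, hub2, hchain, hlow1, hlow2]
    rw [hs'def, ht'def] at h1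
    linarith
  -- finish: case analysis on the max
  have hKx : -K + F < x + y := by
    rw [hKdef]
    linarith [le_abs_self F, neg_abs_le F]
  rcases le_total (rA - rC) (rB - rD) with hmax | hmax
  · -- μ = rB - rD, so x + y ≤ rB + rC ; witness (i2, j2)
    have hμeq : μ = rB - rD := by rw [hμdef]; exact max_eq_left hmax
    have hxy : x + y ≤ rB + rC := by linarith
    have hBne : f SB ≠ ⊥ := by
      intro hb
      have : rB = -K := by rw [hrBdef, hb]; rfl
      linarith [hxy, hrCF, hKx]
    have hCne : f SC ≠ ⊥ := by
      intro hb
      have : rC = -K := by rw [hrCdef, hb]; rfl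
      linarith [hxy, hrBF, hKx]
    obtain ⟨b', hb'⟩ := WithBot.ne_bot_iff_exists.mp hBne
    obtain ⟨c', hc'⟩ := WithBot.ne_bot_iff_exists.mp hCne
    have hrBeq : rB = b' := by rw [hrBdef, ← hb']; rfl
    have hrCeq : rC = c' := by rw [hrCdef, ← hc']; rfl
    refine ⟨i2, hi2m, j2, hj2m, ?_⟩
    rw [hSBeq, hSCeq, ← hx, ← hy, ← hb', ← hc']
    rw [← WithBot.coe_add, ← WithBot.coe_add]
    exact WithBot.coe_le_coe.mpr (by rw [← hrBeq, ← hrCeq]; linarith)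
  · -- μ = rA - rC, so x + y ≤ rA + rD ; witness (i2, j1)
    have hμeq : μ = rA - rC := by rw [hμdef]; exact max_eq_right hmax
    have hxy : x + y ≤ rA + rD := by linarith
    have hAne : f SA ≠ ⊥ := by
      intro hb
      have : rA = -K := by rw [hrAdef, hb]; rfl
      linarith [hxy, hrDF, hKx]
    have hDne : f SD ≠ ⊥ := by
      intro hb
      have : rD = -K := by rw [hrDdef, hb]; rfl
      linarith [hxy, hrAF, hKx]
    obtain ⟨a', ha'⟩ := WithBot.ne_bot_iff_exists.mp hAne
    obtain ⟨d', hd'⟩ := WithBot.ne_bot_iff_exists.mp hDne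
    have hrAeq : rA = a' := by rw [hrAdef, ← ha']; rfl
    have hrDeq : rD = d' := by rw [hrDdef, ← hd']; rfl
    refine ⟨i2, hi2m, j1, hj1m, ?_⟩
    rw [hSAeq, hSDeq, ← hx, ← hy, ← ha', ← hd']
    rw [← WithBot.coe_add, ← WithBot.coe_add]
    exact WithBot.coe_le_coe.mpr (by rw [← hrAeq, ← hrDeq]; linarith)
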